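/- Let G be a compact topological group and u a monoidal natural transformation of the forgetful functor from finite-dimensional continuous complex representations of G to vector spaces. Then u is invertible: the natural transformation u' defined by u'_V = (u_{V^∨})^∨ (the transpose of the component at the dual representation) is a two-sided inverse of u. -/

import Mathlib

/-- A finite-dimensional representation of a topological group is continuous if
all its matrix coefficients are continuous. -/
def IsCtsRep {G : Type} [Group G] [TopologicalSpace G]
    {V : Type} [AddCommGroup V] [Module ℂ V]
    (ρ : Representation ℂ G V) : Prop :=
  ∀ (φ : Module.Dual ℂ V) (v : V), Continuous fun g : G => φ (ρ g v)

open TensorProduct Module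

lemma cts_triv (G : Type) [Group G] [TopologicalSpace G] :
    IsCtsRep (1 : Representation ℂ G ℂ) := by
  intro φ v
  simpa using continuous_const (y := φ v)

lemma cts_dual {G : Type} [Group G] [TopologicalSpace G] [IsTopologicalGroup G]
    {V : Type} [AddCommGroup V] [Module ℂ V] [FiniteDimensional ℂ V]
    (ρ : Representation ℂ G V) (hρ : IsCtsRep ρ) : IsCtsRep ρ.dual := by
  intro Φ f
  obtain ⟨v, rfl⟩ := (Module.evalEquiv ℂ V).surjective Φ
  have : (fun g : G => (Module.evalEquiv ℂ V v) (ρ.dual g f))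
      = fun g : G => f (ρ g⁻¹ v) := by
    funext g
    simp [Representation.dual_apply, Module.Dual.transpose_apply]
  rw [this]
  exact (hρ f v).comp continuous_inv

lemma cts_tprod {G : Type} [Group G] [TopologicalSpace G]
    {V W : Type} [AddCommGroup V] [Module ℂ V] [FiniteDimensional ℂ V]
    [AddCommGroup W] [Module ℂ W] [FiniteDimensional ℂ W]
    (ρ : Representation ℂ G V) (σ : Representation ℂ G W)
    (hρ : IsCtsRep ρ) (hσ : IsCtsRep σ) : IsCtsRep (ρ.tprod σ) := by
  classical
  intro φ t
  induction t using TensorProduct.induction_on with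
  | zero => simpa using continuous_const (y := (0 : ℂ))
  | add x y hx hy =>
    have : (fun g : G => φ ((ρ.tprod σ) g (x + y)))
        = fun g : G => φ ((ρ.tprod σ) g x) + φ ((ρ.tprod σ) g y) := by
      funext g; simp
    rw [this]; exact hx.add hy
  | tmul v w =>
    let b := Basis.ofVectorSpace ℂ V
    let c := Basis.ofVectorSpace ℂ W
    have key : ∀ g : G, φ ((ρ.tprod σ) g (v ⊗ₜ w))
        = ∑ i, ∑ j, b.coord i (ρ g v) * (c.coord j (σ g w) * φ (b i ⊗ₜ c j)) := by
      intro g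
      have h1 : (ρ.tprod σ) g (v ⊗ₜ w) = (ρ g v) ⊗ₜ (σ g w) := by
        simp [Representation.tprod_apply]
      rw [h1]
      conv_lhs => rw [← b.sum_repr (ρ g v), ← c.sum_repr (σ g w)]
      rw [TensorProduct.sum_tmul, map_sum]
      refine Finset.sum_congr rfl fun i _ => ?_
      rw [TensorProduct.tmul_sum, map_sum]
      refine Finset.sum_congr rfl fun j _ => ?_
      simp only [← TensorProduct.smul_tmul', TensorProduct.tmul_smul, map_smul,
        Basis.coord_apply, smul_eq_mul]
      ring
    have : (fun g : G => φ ((ρ.tprod σ) g (v ⊗ₜ w)))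
        = fun g : G => ∑ i, ∑ j, b.coord i (ρ g v) * (c.coord j (σ g w) * φ (b i ⊗ₜ c j)) := by
      funext g; exact key g
    rw [this]
    apply continuous_finset_sum
    intro i _
    apply continuous_finset_sum
    intro j _
    exact ((hρ (b.coord i) v)).mul (((hσ (c.coord j) w)).mul continuous_const)

set_option maxHeartbeats 1000000 in
set_option synthInstance.maxHeartbeats 400000 in
lemma coev_invariant {G : Type} [Group G]
    {V : Type} [AddCommGroup V] [Module ℂ V] [FiniteDimensional ℂ V]
    (ρ : Representation ℂ G V) (g : G) :
    (∑ i, TensorProduct.map (ρ g) (ρ.dual g)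
        ((Basis.ofVectorSpace ℂ V) i ⊗ₜ[ℂ] (Basis.ofVectorSpace ℂ V).coord i))
      = ∑ i, (Basis.ofVectorSpace ℂ V) i ⊗ₜ[ℂ] (Basis.ofVectorSpace ℂ V).coord i := by
  classical
  set b := Basis.ofVectorSpace ℂ V
  apply (TensorProduct.comm ℂ V (Module.Dual ℂ V)).injective
  apply (dualTensorHomEquiv ℂ V V).injective
  apply LinearMap.ext
  intro w
  simp only [map_sum, TensorProduct.map_tmul, TensorProduct.comm_tmul,
    dualTensorHomEquiv, dualTensorHomEquivOfBasis_apply, LinearEquiv.ofBijective_apply, LinearMap.coe_sum,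
    Finset.sum_apply, dualTensorHom_apply, Representation.dual_apply,
    Module.Dual.transpose_apply, LinearMap.comp_apply, Basis.coord_apply]
  have h1 : ∑ i, (b.repr ((ρ g⁻¹) w)) i • (ρ g) (b i) = ρ g (ρ g⁻¹ w) := by
    simp_rw [← map_smul]
    rw [← map_sum, Basis.sum_repr]
  rw [h1, ← Module.End.mul_apply, ← map_mul, mul_inv_cancel, map_one,
    Module.End.one_apply, Basis.sum_repr]

/-- A monoidal natural transformation `u` of the forgetful functor from
finite-dimensional continuous complex representations of a compact topological
group `G` to vector spaces is invertible, with two-sided inverse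
`u'_V = (u_{V^∨})^∨`, the transpose of the component at the contragredient
representation. -/
theorem monoidal_natTrans_invertible
    (G : Type) [Group G] [TopologicalSpace G] [IsTopologicalGroup G] [CompactSpace G]
    (u : ∀ (V : Type) [AddCommGroup V] [Module ℂ V] [FiniteDimensional ℂ V],
      Representation ℂ G V → (V →ₗ[ℂ] V))
    -- naturality with respect to equivariant maps
    (hnat : ∀ (V W : Type) [AddCommGroup V] [Module ℂ V] [FiniteDimensional ℂ V]
      [AddCommGroup W] [Module ℂ W] [FiniteDimensional ℂ W]
      (ρ : Representation ℂ G V) (σ : Representation ℂ G W),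
      IsCtsRep ρ → IsCtsRep σ → ∀ f : V →ₗ[ℂ] W,
        (∀ g : G, f ∘ₗ ρ g = σ g ∘ₗ f) → u W σ ∘ₗ f = f ∘ₗ u V ρ)
    -- monoidality: `u_{V ⊗ W} = u_V ⊗ u_W`
    (hmon : ∀ (V W : Type) [AddCommGroup V] [Module ℂ V] [FiniteDimensional ℂ V]
      [AddCommGroup W] [Module ℂ W] [FiniteDimensional ℂ W]
      (ρ : Representation ℂ G V) (σ : Representation ℂ G W),
      IsCtsRep ρ → IsCtsRep σ →
        u (TensorProduct ℂ V W) (ρ.tprod σ) = TensorProduct.map (u V ρ) (u W σ))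
    -- `u` is the identity on the trivial representation
    (hunit : u ℂ 1 = LinearMap.id)
    -- the component of `u` at a continuous representation
    (V : Type) [AddCommGroup V] [Module ℂ V] [FiniteDimensional ℂ V]
    (ρ : Representation ℂ G V) (hρ : IsCtsRep ρ) :
    Function.Bijective (u V ρ) ∧
    ((Module.evalEquiv ℂ V).symm.toLinearMap ∘ₗ
        (u (Module.Dual ℂ V) ρ.dual).dualMap ∘ₗ (Module.evalEquiv ℂ V).toLinearMap) ∘ₗ
        u V ρ = LinearMap.id ∧
    u V ρ ∘ₗ ((Module.evalEquiv ℂ V).symm.toLinearMap ∘ₗ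
        (u (Module.Dual ℂ V) ρ.dual).dualMap ∘ₗ (Module.evalEquiv ℂ V).toLinearMap) =
      LinearMap.id := by
  classical
  have hdual : IsCtsRep ρ.dual := cts_dual ρ hρ
  have htriv : IsCtsRep (1 : Representation ℂ G ℂ) := cts_triv G
  have hdt : IsCtsRep (ρ.dual.tprod ρ) := cts_tprod _ _ hdual hρ
  have htd : IsCtsRep (ρ.tprod ρ.dual) := cts_tprod _ _ hρ hdual
  -- evaluation identity
  have hev : ∀ (φ : Module.Dual ℂ V) (v : V),
      u (Module.Dual ℂ V) ρ.dual φ (u V ρ v) = φ v := by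
    have hequiv : ∀ g : G, contractLeft ℂ V ∘ₗ (ρ.dual.tprod ρ) g
        = (1 : Representation ℂ G ℂ) g ∘ₗ contractLeft ℂ V := by
      intro g
      apply TensorProduct.ext'
      intro φ v
      simp only [LinearMap.comp_apply, Representation.tprod_apply,
        TensorProduct.map_tmul, contractLeft_apply, Representation.dual_apply,
        Module.Dual.transpose_apply]
      rw [← Module.End.mul_apply, ← map_mul, inv_mul_cancel, map_one,
        Module.End.one_apply]
      simp
    have h := hnat _ _ (ρ.dual.tprod ρ) 1 hdt htriv (contractLeft ℂ V) hequiv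
    rw [hunit, hmon _ _ _ _ hdual hρ] at h
    intro φ v
    have h2 := congrArg
      (fun f : (Module.Dual ℂ V ⊗[ℂ] V) →ₗ[ℂ] ℂ => f (φ ⊗ₜ[ℂ] v)) h
    simpa [contractLeft_apply] using h2.symm
  -- coevaluation identity
  set b := Basis.ofVectorSpace ℂ V with hb
  have hco : (∑ i, (u V ρ) (b i) ⊗ₜ[ℂ] (u (Module.Dual ℂ V) ρ.dual) (b.coord i))
      = ∑ i, b i ⊗ₜ[ℂ] b.coord i := by
    have hequiv : ∀ g : G, coevaluation ℂ V ∘ₗ (1 : Representation ℂ G ℂ) g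
        = (ρ.tprod ρ.dual) g ∘ₗ coevaluation ℂ V := by
      intro g
      apply LinearMap.ext_ring
      have h1 : ((1 : Representation ℂ G ℂ) g) (1 : ℂ) = 1 := by simp
      simp only [LinearMap.comp_apply, h1, coevaluation_apply_one,
        Representation.tprod_apply, map_sum]
      exact (coev_invariant ρ g).symm
    have h := hnat ℂ _ 1 (ρ.tprod ρ.dual) htriv htd (coevaluation ℂ V) hequiv
    rw [hunit, hmon _ _ _ _ hρ hdual] at h
    have h2 := congrArg (fun f : ℂ →ₗ[ℂ] (V ⊗[ℂ] Module.Dual ℂ V) => f 1) h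
    simp only [LinearMap.comp_apply, LinearMap.id_apply, coevaluation_apply_one,
      map_sum, TensorProduct.map_tmul] at h2
    exact h2
  -- the candidate inverse
  set u' : V →ₗ[ℂ] V := (Module.evalEquiv ℂ V).symm.toLinearMap ∘ₗ
      (u (Module.Dual ℂ V) ρ.dual).dualMap ∘ₗ (Module.evalEquiv ℂ V).toLinearMap
    with hu'
  have hu'app : ∀ (v : V) (φ : Module.Dual ℂ V),
      φ (u' v) = u (Module.Dual ℂ V) ρ.dual φ v := by
    intro v φ
    have : φ (u' v) = Module.evalEquiv ℂ V (u' v) φ := by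
      simp [Module.evalEquiv_apply]
    rw [this, hu']
    simp only [LinearMap.comp_apply, LinearEquiv.coe_coe,
      LinearEquiv.apply_symm_apply, LinearMap.dualMap_apply,
      Module.evalEquiv_apply, Module.Dual.eval_apply]
  -- left inverse
  have hleft : u' ∘ₗ u V ρ = LinearMap.id := by
    apply LinearMap.ext
    intro v
    simp only [LinearMap.comp_apply, LinearMap.id_apply]
    apply (Module.evalEquiv ℂ V).injective
    apply LinearMap.ext
    intro φ
    have := hu'app (u V ρ v) φ
    simp only [Module.evalEquiv_apply, Module.Dual.eval_apply]
    rw [this, hev]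
  -- right inverse
  have hright : u V ρ ∘ₗ u' = LinearMap.id := by
    apply LinearMap.ext
    intro v
    simp only [LinearMap.comp_apply, LinearMap.id_apply]
    have hw : ∀ i, b.repr (u' v) i = u (Module.Dual ℂ V) ρ.dual (b.coord i) v := by
      intro i
      rw [← Basis.coord_apply, hu'app]
    have huv : u V ρ (u' v) = ∑ i, u (Module.Dual ℂ V) ρ.dual (b.coord i) v
        • u V ρ (b i) := by
      conv_lhs => rw [← b.sum_repr (u' v)]
      rw [map_sum]
      refine Finset.sum_congr rfl fun i _ => ?_
      rw [map_smul, hw]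
    let F : V ⊗[ℂ] Module.Dual ℂ V →ₗ[ℂ] V :=
      TensorProduct.lift (LinearMap.mk₂ ℂ (fun x φ => φ v • x)
        (fun x y φ => smul_add _ _ _)
        (fun c x φ => smul_comm _ _ _)
        (fun x φ ψ => by simp [add_smul])
        (fun c x φ => by simp [mul_smul]))
    have h3 := congrArg F hco
    simp only [map_sum, F, TensorProduct.lift.tmul, LinearMap.mk₂_apply] at h3
    rw [huv, h3]
    simp only [Basis.coord_apply]
    exact b.sum_repr v
  refine ⟨⟨?_, ?_⟩, hleft, hright⟩
  · intro x y hxy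
    have hx := LinearMap.congr_fun hleft x
    have hy := LinearMap.congr_fun hleft y
    simp only [LinearMap.comp_apply, LinearMap.id_apply] at hx hy
    rw [← hx, ← hy, hxy]
  · intro y
    refine ⟨u' y, ?_⟩
    have := LinearMap.congr_fun hright y
    simpa using this
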